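/- Fix a directed edge e and suppose ‖x‖_∞ = max_{ē∈E} |x_ē| < 1/(Δ−1), where Δ ≥ 2 is the maximum vertex degree of 𝒢. Then Σ_ℓ λ(ℓ)/|ℓ| = 0, where the sum ranges over all rooted loops ℓ that visit both e and −e at least once. -/

import Mathlib

open scoped BigOperators

/-- The straight line segment drawn for an (unordered) edge, given the
positions of the vertices in the complex plane. -/
def segOf {α : Type*} (pos : α → ℂ) : Sym2 α → Set ℂ :=
  Sym2.lift ⟨fun u v => segment ℝ (pos u) (pos v), fun u v => segment_symm ℝ (pos u) (pos v)⟩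

/-- A finite graph embedded in the complex plane: vertices are distinct points
of `ℂ`, edges are unordered pairs of distinct vertices drawn as straight line
segments which pairwise intersect only at common endpoints, and no vertex lies
on an edge which does not contain it. -/
structure PlaneGraph where
  V : Type
  fintypeV : Fintype V
  decEqV : DecidableEq V
  pos : V → ℂ
  pos_inj : Function.Injective pos
  E : Finset (Sym2 V)
  not_diag : ∀ e ∈ E, ¬ e.IsDiag
  edges_meet : ∀ e₁ ∈ E, ∀ e₂ ∈ E, e₁ ≠ e₂ → ∀ p : ℂ,
    p ∈ segOf pos e₁ → p ∈ segOf pos e₂ → ∃ w : V, w ∈ e₁ ∧ w ∈ e₂ ∧ p = pos w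
  vertex_on_edge : ∀ e ∈ E, ∀ w : V, pos w ∈ segOf pos e → w ∈ e

attribute [instance] PlaneGraph.fintypeV PlaneGraph.decEqV

namespace PlaneGraph

variable (G : PlaneGraph)

/-- A directed edge: an ordered pair of vertices whose underlying
unordered pair is an edge of the graph. -/
abbrev DEdge : Type := {p : G.V × G.V // s(p.1, p.2) ∈ G.E}

/-- The reversal `-e` of a directed edge. -/
def rev (e : G.DEdge) : G.DEdge :=
  ⟨(e.val.2, e.val.1), by rw [Sym2.eq_swap]; exact e.property⟩

/-- The undirected version `ē` of a directed edge. -/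
def undir (e : G.DEdge) : Sym2 G.V := s(e.val.1, e.val.2)

/-- The turning angle `∠(e,g) = Arg((h_g - t_g)/(h_e - t_e)) ∈ (-π, π]`. -/
noncomputable def tangle (e g : G.DEdge) : ℝ :=
  Complex.arg ((G.pos g.val.2 - G.pos g.val.1) / (G.pos e.val.2 - G.pos e.val.1))

/-- The Kac–Ward transition matrix `Λ`, indexed by directed edges. -/
noncomputable def transMatrix (x : Sym2 G.V → ℝ) : Matrix G.DEdge G.DEdge ℂ :=
  fun e g =>
    if e.val.2 = g.val.1 ∧ g ≠ G.rev e then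
      (x (G.undir e) : ℂ) * Complex.exp (Complex.I / 2 * (G.tangle e g : ℂ))
    else 0

/-- A non-backtracking walk of length `n ≥ 1`, encoded as the list
`(w₁, …, w_{n+1})` of its `n+1` directed edges: consecutive edges are
incident head-to-tail and the walk never immediately reverses an edge. -/
def IsWalk (l : List G.DEdge) : Prop :=
  2 ≤ l.length ∧ l.Chain' (fun e g => e.val.2 = g.val.1 ∧ g ≠ G.rev e)

/-- The length `|w|` (number of steps) of a walk given as a list of edges. -/
def len (l : List G.DEdge) : ℕ := l.length - 1

/-- The weight `λ(w) = ∏_{i=1}^{n} Λ_{w_i, w_{i+1}}` of a walk. -/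
noncomputable def wlam (x : Sym2 G.V → ℝ) (l : List G.DEdge) : ℂ :=
  (List.zipWith (fun e g => G.transMatrix x e g) l l.tail).prod

/-- The edge weight `x(w) = ∏_{i=1}^{n} x_{\bar{w_i}}` of a walk
(the weight of the last edge is not included). -/
def wx (x : Sym2 G.V → ℝ) (l : List G.DEdge) : ℝ :=
  (l.dropLast.map (fun e => x (G.undir e))).prod

/-- The total turning angle `α(w) = Σ_{i=1}^{n} ∠(w_i, w_{i+1})` of a walk. -/
noncomputable def walpha (l : List G.DEdge) : ℝ :=
  (List.zipWith (fun e g => G.tangle e g) l l.tail).sum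

/-- The reversal `w⁻¹ = (-w_{n+1}, …, -w₁)` of a walk. -/
def wrev (l : List G.DEdge) : List G.DEdge := (l.map G.rev).reverse

/-- The concatenation `w ⊕ w'` of two walks, the first ending with the
directed edge with which the second starts. -/
def wconcat (l l' : List G.DEdge) : List G.DEdge := l ++ l'.tail

/-- A (rooted) loop: a walk of length at least `2` which starts and ends
with the same directed edge. -/
def IsLoop (l : List G.DEdge) : Prop :=
  G.IsWalk l ∧ 3 ≤ l.length ∧ l.head? = l.getLast?

/-- The number of times a loop `ℓ = (ℓ₁, …, ℓ_{n+1})` visits a directed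
edge `e`, i.e. the number of occurrences of `e` among `ℓ₁, …, ℓ_n`. -/
def visits (l : List G.DEdge) (e : G.DEdge) : ℕ := l.dropLast.count e

/-- A loop `ℓ` of length `n` is self-avoiding if each vertex appearing in it
appears in exactly two of the directed edges `ℓ₁, …, ℓ_n`. -/
def SelfAvoiding (l : List G.DEdge) : Prop :=
  G.IsLoop l ∧ ∀ v : G.V,
    l.dropLast.countP (fun e => decide (v = e.val.1 ∨ v = e.val.2)) ≠ 0 →
    l.dropLast.countP (fun e => decide (v = e.val.1 ∨ v = e.val.2)) = 2

/-- The degree of a vertex: the number of edges containing it. -/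
def degV (v : G.V) : ℕ := (G.E.filter (fun e => v ∈ e)).card

/-- A finite set of edges is even if every vertex belongs to an even number
of its edges. -/
def IsEvenSet (H : Finset (Sym2 G.V)) : Prop :=
  ∀ v : G.V, Even ((H.filter (fun e => v ∈ e)).card)

instance : DecidablePred G.IsEvenSet := fun H =>
  decidable_of_iff (∀ v : G.V, Even ((H.filter (fun e => v ∈ e)).card)) Iff.rfl

/-- The generating function `Z = Σ_{H even} ∏_{ē ∈ H} x_ē` of even
subgraphs. -/
def Z (x : Sym2 G.V → ℝ) : ℝ :=
  ∑ H ∈ G.E.powerset.filter G.IsEvenSet, ∏ e ∈ H, x e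

end PlaneGraph
namespace PlaneGraph

variable {G : PlaneGraph}

/-- The step relation between consecutive directed edges of a walk. -/
def Rel (G : PlaneGraph) (a b : G.DEdge) : Prop := a.val.2 = b.val.1 ∧ b ≠ G.rev a

lemma ends_ne (a : G.DEdge) : a.val.1 ≠ a.val.2 := by
  intro h
  exact G.not_diag _ a.property (Sym2.mk_isDiag_iff.mpr h)

@[simp] lemma rev_rev (a : G.DEdge) : G.rev (G.rev a) = a := by
  apply Subtype.ext; simp [rev]

lemma rev_ne (a : G.DEdge) : G.rev a ≠ a := by
  intro h
  have := congrArg (fun z => z.val.1) h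
  exact ends_ne a (by simpa [rev] using this.symm)

@[simp] lemma undir_rev (a : G.DEdge) : G.undir (G.rev a) = G.undir a := by
  simp [undir, rev, Sym2.eq_swap]

/-- The direction vector of a directed edge. -/
def dir (a : G.DEdge) : ℂ := G.pos a.val.2 - G.pos a.val.1

lemma dir_ne_zero (a : G.DEdge) : dir a ≠ 0 := by
  simp only [dir, sub_ne_zero]
  exact fun h => ends_ne a (G.pos_inj h.symm)

@[simp] lemma dir_rev (a : G.DEdge) : dir (G.rev a) = -dir a := by
  simp [dir, rev]

lemma tangle_def (a b : G.DEdge) : G.tangle a b = Complex.arg (dir b / dir a) := rfl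

lemma tangle_ne_pi {a b : G.DEdge} (h1 : a.val.2 = b.val.1) (h2 : b ≠ G.rev a) :
    G.tangle a b ≠ Real.pi := by
  intro hpi
  rw [tangle_def] at hpi
  obtain ⟨hre, him⟩ := Complex.arg_eq_pi_iff.mp hpi
  set r : ℝ := (dir b / dir a).re with hrdef
  have ha0 : dir a ≠ 0 := dir_ne_zero a
  have hzr : dir b / dir a = (r : ℝ) := by
    apply Complex.ext
    · simp [hrdef]
    · simpa using him
  have hdb : dir b = (r : ℂ) * dir a := by
    field_simp at hzr
    linear_combination hzr
  by_cases he : G.undir a = G.undir b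
  · rcases Sym2.eq_iff.mp he with ⟨hu, hv⟩ | ⟨hu, hv⟩
    · exact ends_ne a (hu.trans h1.symm)
    · exact h2 (Subtype.ext (Prod.ext h1.symm hu.symm))
  · -- geometric contradiction: the two segments overlap
    set t : ℝ := -r with htdef
    have ht : 0 < t := by simp [htdef]; linarith
    set A2 : ℂ := G.pos a.val.2 with hA2
    have hposb1 : G.pos b.val.1 = A2 := by rw [hA2, h1]
    set φ : ℝ → ℂ := fun s => A2 - (s : ℂ) * dir a with hφ
    have hsub : ∀ s ∈ Set.Icc (0:ℝ) (min 1 t), φ s ∈ Set.range G.pos := by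
      intro s hs
      obtain ⟨hs0, hs1⟩ := hs
      have hseg1 : φ s ∈ segOf G.pos (G.undir a) := by
        simp only [undir, segOf, Sym2.lift_mk]
        refine ⟨s, 1 - s, hs0, by
          have : s ≤ 1 := le_trans hs1 (min_le_left _ _)
          linarith, by ring, ?_⟩
        simp only [hφ]
        push_cast [Complex.real_smul]
        simp only [dir, hA2]
        ring
      have hseg2 : φ s ∈ segOf G.pos (G.undir b) := by
        simp only [undir, segOf, Sym2.lift_mk]
        have hst : s ≤ t := le_trans hs1 (min_le_right _ _)
        refine ⟨1 - s/t, s/t, by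
          have : s / t ≤ 1 := (div_le_one ht).mpr hst
          linarith, by positivity, by ring, ?_⟩
        have hb2 : G.pos b.val.2 = A2 + dir b := by simp [dir, hposb1]
        simp only [hφ, hposb1, hb2, hdb]
        push_cast [Complex.real_smul]
        have htne : (t : ℂ) ≠ 0 := by exact_mod_cast ne_of_gt ht
        have hrt : (r : ℂ) = -(t : ℂ) := by
          simp [htdef]
        rw [hrt]
        field_simp
        ring
      obtain ⟨w, _, _, hw⟩ := G.edges_meet _ a.property _ b.property he _ hseg1 hseg2
      exact ⟨w, hw.symm⟩
    have hinf : (Set.Icc (0:ℝ) (min 1 t)).Infinite :=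
      Set.Icc_infinite (lt_min one_pos ht)
    have hinj : Set.InjOn φ (Set.Icc (0:ℝ) (min 1 t)) := by
      intro s hs s' hs' hss
      simp only [hφ, sub_right_injective.eq_iff] at hss
      have : (s : ℂ) = s' := mul_right_cancel₀ ha0 hss
      exact_mod_cast this
    have : (Set.range G.pos).Infinite :=
      Set.Infinite.mono (by rintro p ⟨s, hs, rfl⟩; exact hsub s hs) (hinf.image hinj)
    exact this (Set.finite_range G.pos)

end PlaneGraph
namespace PlaneGraph

variable {G : PlaneGraph}

lemma rel_rev {a b : G.DEdge} (h : Rel G a b) : Rel G (G.rev b) (G.rev a) := by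
  obtain ⟨h1, h2⟩ := h
  constructor
  · simp [rev, h1]
  · intro hc
    simp only [rev_rev] at hc
    exact h2 hc.symm

lemma tangle_rev {a b : G.DEdge} (h : Rel G a b) :
    G.tangle (G.rev b) (G.rev a) = - G.tangle a b := by
  have hne := tangle_ne_pi h.1 h.2
  rw [tangle_def] at hne ⊢
  rw [tangle_def]
  rw [dir_rev, dir_rev, neg_div_neg_eq]
  rw [show dir a / dir b = (dir b / dir a)⁻¹ by
    rw [inv_div]]
  rw [Complex.arg_inv, if_neg hne]

/-- Half-angle phase factor. -/
noncomputable def ph (a b : G.DEdge) : ℂ :=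
  Complex.exp (Complex.I / 2 * (G.tangle a b : ℂ))

lemma ph_ne_zero (a b : G.DEdge) : ph a b ≠ 0 := Complex.exp_ne_zero _

lemma ph_rev {a b : G.DEdge} (h : Rel G a b) : ph (G.rev b) (G.rev a) = (ph a b)⁻¹ := by
  rw [ph, ph, tangle_rev h, ← Complex.exp_neg]
  push_cast
  ring_nf

/-- Normalized direction. -/
noncomputable def dirU (a : G.DEdge) : ℂ := dir a / (‖dir a‖ : ℂ)

lemma dirU_ne_zero (a : G.DEdge) : dirU a ≠ 0 := by
  apply div_ne_zero (dir_ne_zero a)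
  exact_mod_cast (norm_ne_zero_iff.mpr (dir_ne_zero a))

@[simp] lemma dirU_rev (a : G.DEdge) : dirU (G.rev a) = - dirU a := by
  simp [dirU, neg_div]

lemma ph_sq (a b : G.DEdge) : ph a b * ph a b = dirU b / dirU a := by
  rw [ph, ← Complex.exp_add]
  have h1 : Complex.I / 2 * (G.tangle a b : ℂ) + Complex.I / 2 * (G.tangle a b : ℂ)
      = (G.tangle a b : ℂ) * Complex.I := by ring
  rw [h1, tangle_def]
  set z : ℂ := dir b / dir a with hz
  have hzne : z ≠ 0 := div_ne_zero (dir_ne_zero b) (dir_ne_zero a)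
  have habs : (‖z‖ : ℂ) ≠ 0 := by
    exact_mod_cast norm_ne_zero_iff.mpr hzne
  have := Complex.norm_mul_exp_arg_mul_I z
  have hexp : Complex.exp ((Complex.arg z : ℂ) * Complex.I) = z / (‖z‖ : ℂ) := by
    rw [eq_div_iff habs, mul_comm]
    exact this
  rw [hexp, dirU, dirU, hz]
  rw [norm_div]
  push_cast
  have hb := dir_ne_zero b
  have ha := dir_ne_zero a
  have hab : (‖dir a‖ : ℂ) ≠ 0 := by
    exact_mod_cast norm_ne_zero_iff.mpr ha
  have hbb : (‖dir b‖ : ℂ) ≠ 0 := by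
    exact_mod_cast norm_ne_zero_iff.mpr hb
  field_simp

end PlaneGraph
namespace PlaneGraph

variable {G : PlaneGraph}

/-- Anchored walk weight. -/
noncomputable def WpW (x : Sym2 G.V → ℝ) : G.DEdge → List G.DEdge → ℂ
  | _, [] => 1
  | a, b :: t => G.transMatrix x a b * WpW x b t

/-- Anchored phase product. -/
noncomputable def PhW : G.DEdge → List G.DEdge → ℂ
  | _, [] => 1
  | a, b :: t => ph a b * PhW b t

/-- Last element of `a :: t`. -/
def lastD : G.DEdge → List G.DEdge → G.DEdge
  | a, [] => a
  | _, b :: t => lastD b t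

@[simp] lemma lastD_nil (a : G.DEdge) : lastD a [] = a := rfl
@[simp] lemma lastD_cons (a b : G.DEdge) (t : List G.DEdge) :
    lastD a (b :: t) = lastD b t := rfl

lemma lastD_concat (z : G.DEdge) : ∀ (u : List G.DEdge) (a : G.DEdge),
    lastD a (u ++ [z]) = z
  | [], a => rfl
  | b :: t, a => by rw [List.cons_append, lastD_cons, lastD_concat z t b]

lemma wlam_nil (x : Sym2 G.V → ℝ) : G.wlam x [] = 1 := rfl
lemma wlam_single (x : Sym2 G.V → ℝ) (a : G.DEdge) : G.wlam x [a] = 1 := rfl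

lemma wlam_cons_cons (x : Sym2 G.V → ℝ) (a b : G.DEdge) (t : List G.DEdge) :
    G.wlam x (a :: b :: t) = G.transMatrix x a b * G.wlam x (b :: t) := by
  simp [wlam]

lemma wlam_eq_WpW (x : Sym2 G.V → ℝ) : ∀ (t : List G.DEdge) (a : G.DEdge),
    G.wlam x (a :: t) = WpW x a t
  | [], a => rfl
  | b :: t, a => by
    rw [wlam_cons_cons, WpW, wlam_eq_WpW x t b]

lemma wlam_split (x : Sym2 G.V → ℝ) (f : G.DEdge) :
    ∀ (A R' : List G.DEdge), G.wlam x (A ++ f :: R') = G.wlam x (A ++ [f]) * G.wlam x (f :: R')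
  | [], R' => by simp [wlam_single]
  | a :: A, R' => by
    cases A with
    | nil =>
      simp only [List.cons_append, List.nil_append]
      rw [wlam_cons_cons, wlam_cons_cons, wlam_single]
      ring
    | cons a' A' =>
      have ih := wlam_split x f (a' :: A') R'
      simp only [List.cons_append] at ih ⊢
      rw [wlam_cons_cons, wlam_cons_cons, ih]
      ring

lemma PhW_ne_zero : ∀ (t : List G.DEdge) (a : G.DEdge), PhW a t ≠ 0
  | [], a => one_ne_zero
  | b :: t, a => mul_ne_zero (ph_ne_zero a b) (PhW_ne_zero t b)

lemma PhW_concat (z : G.DEdge) : ∀ (u : List G.DEdge) (a : G.DEdge),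
    PhW a (u ++ [z]) = PhW a u * ph (lastD a u) z
  | [], a => by simp [PhW]
  | b :: t, a => by
    rw [List.cons_append, PhW, PhW_concat z t b, PhW, lastD_cons]
    ring

/-- Factorization of the walk weight into edge weights and phases. -/
lemma WpW_factor (x : Sym2 G.V → ℝ) : ∀ (t : List G.DEdge) (a : G.DEdge),
    List.Chain (Rel G) a t →
    WpW x a t = (((a :: t).dropLast).map (fun d => (x (G.undir d) : ℂ))).prod * PhW a t
  | [], a, _ => by simp [WpW, PhW]
  | b :: t, a, h => by
    rcases h with _ | _ | ⟨hab, hbt⟩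
    rw [WpW, PhW, WpW_factor x t b hbt]
    have hΛ : G.transMatrix x a b = (x (G.undir a) : ℂ) * ph a b := by
      rw [transMatrix, if_pos (⟨hab.1, hab.2⟩ : a.val.2 = b.val.1 ∧ b ≠ G.rev a)]
      rfl
    rw [hΛ]
    rw [show ((a :: b :: t).dropLast) = a :: ((b :: t).dropLast) by simp]
    rw [List.map_cons, List.prod_cons]
    ring

/-- Squared phase telescopes. -/
lemma PhW_sq : ∀ (t : List G.DEdge) (a : G.DEdge),
    PhW a t * PhW a t = dirU (lastD a t) / dirU a
  | [], a => by simp [PhW, div_self (dirU_ne_zero a)]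
  | b :: t, a => by
    rw [PhW, lastD_cons]
    have h1 : ph a b * PhW b t * (ph a b * PhW b t)
        = (ph a b * ph a b) * (PhW b t * PhW b t) := by ring
    rw [h1, ph_sq, PhW_sq t b]
    rw [div_mul_div_comm]
    rw [mul_comm (dirU b) (dirU (lastD b t)), mul_comm (dirU a) (dirU b)]
    rw [← div_div]
    congr 1
    exact mul_div_cancel_right₀ _ (dirU_ne_zero b)

lemma lastD_shift : ∀ (t' : List G.DEdge) (b : G.DEdge),
    lastD (G.rev (lastD b t')) (((((b :: t').dropLast)).map G.rev).reverse) = G.rev b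
  | [], b => by simp
  | c :: t'', b => by
    rw [show ((b :: c :: t'').dropLast) = b :: ((c :: t'').dropLast) by simp]
    rw [List.map_cons, List.reverse_cons]
    rw [lastD_concat]

/-- Phase of the reversed walk is the inverse phase. -/
lemma PhW_rev : ∀ (t : List G.DEdge) (a : G.DEdge), List.Chain (Rel G) a t →
    PhW (G.rev (lastD a t)) ((((a :: t).dropLast).map G.rev).reverse) = (PhW a t)⁻¹
  | [], a, _ => by simp [PhW]
  | b :: t', a, h => by
    rcases h with _ | _ | ⟨hab, hbt⟩
    rw [lastD_cons]
    rw [show ((a :: b :: t').dropLast) = a :: ((b :: t').dropLast) by simp]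
    rw [List.map_cons, List.reverse_cons]
    rw [PhW_concat]
    rw [PhW_rev t' b hbt]
    rw [lastD_shift]
    rw [ph_rev hab]
    rw [PhW]
    rw [mul_inv]
    ring

end PlaneGraph
namespace PlaneGraph

variable {G : PlaneGraph}

lemma chain'_wrev {L : List G.DEdge} (h : List.Chain' (Rel G) L) :
    List.Chain' (Rel G) ((L.map G.rev).reverse) := by
  unfold List.Chain' at h ⊢
  rw [List.isChain_reverse, List.isChain_map]
  exact h.imp (fun a b hab => rel_rev hab)

lemma block'_eq (f : G.DEdge) (M : List G.DEdge) :
    ((f :: (M ++ [G.rev f])).map G.rev).reverse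
      = f :: ((M.map G.rev).reverse ++ [G.rev f]) := by
  simp

/-- The key sign flip: reversing the interior of a block joining `f` to `-f`
negates the walk weight. -/
lemma wlam_block_flip (x : Sym2 G.V → ℝ) {f : G.DEdge} {M : List G.DEdge}
    (hc : List.Chain (Rel G) f (M ++ [G.rev f])) :
    G.wlam x (f :: ((M.map G.rev).reverse ++ [G.rev f]))
      = - G.wlam x (f :: (M ++ [G.rev f])) := by
  have hc' : List.Chain' (Rel G) (f :: (M ++ [G.rev f])) := hc
  have hCb' : List.Chain (Rel G) f ((M.map G.rev).reverse ++ [G.rev f]) := by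
    have h2 := chain'_wrev hc'
    rw [block'_eq] at h2
    exact h2
  rw [wlam_eq_WpW, wlam_eq_WpW, WpW_factor x _ _ hc, WpW_factor x _ _ hCb']
  have hPR := PhW_rev (M ++ [G.rev f]) f hc
  rw [lastD_concat, rev_rev] at hPR
  have hdrop : ((f :: (M ++ [G.rev f])).dropLast) = f :: M := by
    rw [show f :: (M ++ [G.rev f]) = (f :: M) ++ [G.rev f] by simp]
    exact List.dropLast_concat
  rw [hdrop, List.map_cons, List.reverse_cons] at hPR
  have hsq := PhW_sq (M ++ [G.rev f]) f
  rw [lastD_concat, dirU_rev] at hsq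
  have hm1 : PhW f (M ++ [G.rev f]) * PhW f (M ++ [G.rev f]) = -1 := by
    rw [hsq, neg_div, div_self (dirU_ne_zero f)]
  have hinv : (PhW f (M ++ [G.rev f]))⁻¹ = - PhW f (M ++ [G.rev f]) := by
    apply inv_eq_of_mul_eq_one_right
    rw [mul_neg, hm1, neg_neg]
  rw [hPR, hinv]
  have hdrop' : ((f :: ((M.map G.rev).reverse ++ [G.rev f])).dropLast)
      = f :: (M.map G.rev).reverse := by
    rw [show f :: ((M.map G.rev).reverse ++ [G.rev f])
        = (f :: (M.map G.rev).reverse) ++ [G.rev f] by simp]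
    exact List.dropLast_concat
  have hx : ((((f :: ((M.map G.rev).reverse ++ [G.rev f])).dropLast)).map
        (fun d => (x (G.undir d) : ℂ))).prod
      = (((f :: (M ++ [G.rev f])).dropLast).map (fun d => (x (G.undir d) : ℂ))).prod := by
    rw [hdrop, hdrop']
    rw [List.map_cons, List.prod_cons, List.map_cons, List.prod_cons]
    congr 1
    rw [List.map_reverse, List.prod_reverse, List.map_map]
    simp [Function.comp_def, undir_rev]
  rw [hx]
  ring

end PlaneGraph
namespace PlaneGraph

variable {G : PlaneGraph}

/-- `true` iff `g` is neither `e` nor `-e`. -/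
def notEP (e : G.DEdge) : G.DEdge → Bool := fun g => !(decide (g = e) || decide (g = G.rev e))

lemma notEP_eq_false {e g : G.DEdge} (h : g = e ∨ g = G.rev e) : notEP e g = false := by
  rcases h with h | h <;> simp [notEP, h]

lemma of_notEP_true {e g : G.DEdge} (h : notEP e g = true) : g ≠ e ∧ g ≠ G.rev e := by
  simpa [notEP] using h

lemma of_notEP_false {e g : G.DEdge} (h : notEP e g = false) : g = e ∨ g = G.rev e := by
  by_cases h1 : g = e
  · exact Or.inl h1
  · right
    simpa [notEP, h1] using h

/-- The partial reversal operation. -/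
def flipT (e : G.DEdge) (l : List G.DEdge) : List G.DEdge :=
  let c := l.dropLast
  let r := c.dropWhile (notEP e)
  if r.isEmpty then l
  else
    let A := c.takeWhile (notEP e)
    let f := r.headD e
    let q : G.DEdge → Bool := fun g => !(decide (g = G.rev f))
    let m' := ((r.tail).reverse.dropWhile q).tail
    let B := ((r.tail).reverse.takeWhile q).reverse
    (A ++ f :: ((m'.map G.rev) ++ G.rev f :: B)) ++ (A ++ [f]).take 1

/-- A decomposition of a rooted loop visiting `e` and `-e`. -/
structure Decomp (e : G.DEdge) (l : List G.DEdge) : Type where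
  A : List G.DEdge
  f : G.DEdge
  M : List G.DEdge
  B : List G.DEdge
  hf : f = e ∨ f = G.rev e
  hA : ∀ a ∈ A, notEP e a = true
  hB : ∀ b ∈ B, b ≠ G.rev f
  hl : l = (A ++ f :: (M ++ G.rev f :: B)) ++ (A ++ [f]).take 1

lemma takeWhile_middle {α : Type*} (p : α → Bool) (f : α) (t : List α) :
    ∀ (A : List α), (∀ a ∈ A, p a = true) → p f = false →
    (A ++ f :: t).takeWhile p = A ∧ (A ++ f :: t).dropWhile p = f :: t
  | [], _, hf => by simp [List.takeWhile_cons, List.dropWhile_cons, hf]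
  | a :: A, hA, hf => by
    have hpa : p a = true := hA a (by simp)
    have ih := takeWhile_middle p f t A (fun b hb => hA b (by simp [hb])) hf
    simp only [List.cons_append, List.takeWhile_cons, List.dropWhile_cons, hpa]
    simp [ih.1, ih.2]

lemma take_one_shape {α : Type*} (A : List α) (f : α) (Y : List α) :
    (A ++ f :: Y).take 1 = (A ++ [f]).take 1 := by
  cases A <;> simp

lemma head?_take1 {α : Type*} (A : List α) (f : α) (Y : List α) :
    ∃ h0, (A ++ [f]).take 1 = [h0] ∧ (A ++ f :: Y).head? = some h0 := by
  cases A <;> exact ⟨_, rfl, rfl⟩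

lemma flipT_eq {e : G.DEdge} {l : List G.DEdge} (d : Decomp e l) :
    flipT e l = (d.A ++ d.f :: (((d.M.map G.rev).reverse) ++ G.rev d.f :: d.B))
      ++ (d.A ++ [d.f]).take 1 := by
  obtain ⟨A, f, M, B, hf, hA, hB, hl⟩ := d
  obtain ⟨h0, h0eq, -⟩ := head?_take1 A f (M ++ G.rev f :: B)
  have hdl : l.dropLast = A ++ f :: (M ++ G.rev f :: B) := by
    rw [hl, h0eq, List.dropLast_concat]
  have hTW := takeWhile_middle (notEP e) f (M ++ G.rev f :: B) A hA (notEP_eq_false hf)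
  have hrev : (M ++ G.rev f :: B).reverse = B.reverse ++ G.rev f :: M.reverse := by
    simp
  have hqB : ∀ b ∈ B.reverse, (!(decide (b = G.rev f))) = true := by
    intro b hb
    simp [hB b (List.mem_reverse.mp hb)]
  have hTW2 := takeWhile_middle (fun g => !(decide (g = G.rev f))) (G.rev f) M.reverse
    B.reverse hqB (by simp)
  simp only [flipT]
  rw [hdl, hTW.2]
  rw [List.headD_cons]
  simp only [List.isEmpty_cons, Bool.false_eq_true, if_false, List.headD_cons,
    List.tail_cons, hTW.1]
  rw [hrev, hTW2.1, hTW2.2]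
  simp only [List.tail_cons, List.reverse_reverse]
  rw [List.map_reverse]

lemma good_decomp {e : G.DEdge} {l : List G.DEdge}
    (h : G.IsLoop l ∧ 1 ≤ G.visits l e ∧ 1 ≤ G.visits l (G.rev e)) :
    Nonempty (Decomp e l) := by
  classical
  obtain ⟨⟨hwalk, hchain⟩, hlen3, hheads⟩ := h.1
  have hmem_e : e ∈ l.dropLast := List.count_pos_iff.mp h.2.1
  have hmem_ne : G.rev e ∈ l.dropLast := List.count_pos_iff.mp h.2.2
  set c := l.dropLast with hc
  have hc_ne : c ≠ [] := by
    intro h0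
    rw [h0] at hmem_e
    simp at hmem_e
  obtain ⟨a0, c', hcc⟩ := List.exists_cons_of_ne_nil hc_ne
  have hl_ne : l ≠ [] := by
    intro h0
    rw [h0] at hlen3; simp at hlen3
  have hl2 : l = c ++ c.take 1 := by
    have h1 : c ++ [l.getLast hl_ne] = l := List.dropLast_concat_getLast hl_ne
    have hhead : l.head? = some a0 := by
      rw [← h1, hcc]
      rfl
    have hlast : l.getLast? = some (l.getLast hl_ne) := List.getLast?_eq_getLast hl_ne
    have : l.getLast hl_ne = a0 := by
      have := hheads.symm.trans hhead
      rw [hlast] at this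
      exact Option.some.inj this
    rw [← h1, this, hcc]
    rfl
  -- first split
  have hr_ne : c.dropWhile (notEP e) ≠ [] := by
    intro h0
    have hsplit := List.takeWhile_append_dropWhile (p := notEP e) (l := c)
    rw [h0, List.append_nil] at hsplit
    have : notEP e e = true := List.mem_takeWhile_imp (by rw [hsplit]; exact hmem_e)
    simp [notEP] at this
  obtain ⟨f, rt, hrr⟩ := List.exists_cons_of_ne_nil hr_ne
  have hpf : notEP e f = false := by
    have := List.head_dropWhile_not (notEP e) hr_ne
    simp only [hrr, List.head_cons] at this
    exact this
  have hf : f = e ∨ f = G.rev e := of_notEP_false hpf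
  have hA : ∀ a ∈ c.takeWhile (notEP e), notEP e a = true := fun a ha =>
    List.mem_takeWhile_imp ha
  have hcsplit : c = c.takeWhile (notEP e) ++ f :: rt := by
    conv_lhs => rw [← List.takeWhile_append_dropWhile (p := notEP e) (l := c)]
    rw [hrr]
  have hnf_mem : G.rev f ∈ c := by
    rcases hf with h' | h'
    · rw [h']; exact hmem_ne
    · rw [h', rev_rev]; exact hmem_e
  have hnf_rt : G.rev f ∈ rt := by
    rw [hcsplit] at hnf_mem
    rcases List.mem_append.mp hnf_mem with h' | h'
    · have h2 := of_notEP_true (hA _ h')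
      rcases hf with h3 | h3
      · exact absurd (by rw [h3]) h2.2
      · exact absurd (by rw [h3, rev_rev]) h2.1
    · rcases List.mem_cons.mp h' with h'' | h''
      · exact absurd h'' (rev_ne f)
      · exact h''
  -- second split
  set q : G.DEdge → Bool := fun g => !(decide (g = G.rev f)) with hq
  have hs_ne : rt.reverse.dropWhile q ≠ [] := by
    intro h0
    have hsplit := List.takeWhile_append_dropWhile (p := q) (l := rt.reverse)
    rw [h0, List.append_nil] at hsplit
    have : q (G.rev f) = true := List.mem_takeWhile_imp
      (by rw [hsplit]; exact List.mem_reverse.mpr hnf_rt)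
    simp [hq] at this
  obtain ⟨y, m', hy⟩ := List.exists_cons_of_ne_nil hs_ne
  have hyq : q y = false := by
    have := List.head_dropWhile_not q hs_ne
    simp only [hy, List.head_cons] at this
    exact this
  have hyf : y = G.rev f := by simpa [hq] using hyq
  have hB : ∀ b ∈ (rt.reverse.takeWhile q).reverse, b ≠ G.rev f := by
    intro b hb
    have := List.mem_takeWhile_imp (List.mem_reverse.mp hb)
    simpa [hq] using this
  have h1 : rt.reverse = rt.reverse.takeWhile q ++ G.rev f :: m' := by
    conv_lhs => rw [← List.takeWhile_append_dropWhile (p := q) (l := rt.reverse)]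
    rw [hy, hyf]
  obtain ⟨B, hBdef⟩ : ∃ B', (rt.reverse.takeWhile q).reverse = B' := ⟨_, rfl⟩
  have hTWB : rt.reverse.takeWhile q = B.reverse := by rw [← hBdef, List.reverse_reverse]
  rw [hTWB] at h1
  rw [hBdef] at hB
  have hrt : rt = m'.reverse ++ G.rev f :: B := by
    have h2 := congrArg List.reverse h1
    rw [List.reverse_reverse] at h2
    rw [h2]
    simp
  obtain ⟨M, hMdef⟩ : ∃ M', m'.reverse = M' := ⟨_, rfl⟩
  rw [hMdef] at hrt
  obtain ⟨A, hAdef⟩ : ∃ A', c.takeWhile (notEP e) = A' := ⟨_, rfl⟩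
  rw [hAdef] at hA hcsplit
  have hcore : c = A ++ f :: (M ++ G.rev f :: B) := by rw [hcsplit, hrt]
  refine ⟨⟨A, f, M, B, hf, hA, hB, ?_⟩⟩
  rw [hl2, hcore, take_one_shape]

end PlaneGraph
namespace PlaneGraph

variable {G : PlaneGraph}

lemma flipT_eq' {e : G.DEdge} {l : List G.DEdge} (A : List G.DEdge) (f : G.DEdge)
    (M B : List G.DEdge)
    (hf : f = e ∨ f = G.rev e) (hA : ∀ a ∈ A, notEP e a = true)
    (hB : ∀ b ∈ B, b ≠ G.rev f)
    (hl : l = (A ++ f :: (M ++ G.rev f :: B)) ++ (A ++ [f]).take 1) :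
    flipT e l = (A ++ f :: (((M.map G.rev).reverse) ++ G.rev f :: B)) ++ (A ++ [f]).take 1 :=
  flipT_eq ⟨A, f, M, B, hf, hA, hB, hl⟩

lemma chain'_mid {α : Type*} {R : α → α → Prop} {A rest b1 b2 : List α}
    (hh : b1.head? = b2.head?) (hlast : b1.getLast? = b2.getLast?)
    (hc2 : List.Chain' R b2) (h : List.Chain' R (A ++ (b1 ++ rest))) :
    List.Chain' R (A ++ (b2 ++ rest)) := by
  unfold List.Chain' at h hc2 ⊢
  rw [List.isChain_append] at h ⊢
  obtain ⟨h1, h2, h3⟩ := h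
  rw [List.isChain_append] at h2
  refine ⟨h1, ?_, ?_⟩
  · rw [List.isChain_append]
    refine ⟨hc2, h2.2.1, ?_⟩
    intro y hy z hz
    exact h2.2.2 y (by rw [hlast]; exact hy) z hz
  · intro y hy z hz
    apply h3 y hy
    rw [List.head?_append] at hz ⊢
    rw [hh]
    exact hz

lemma cons_block_getLast {α : Type*} (f z : α) (Y : List α) :
    (f :: (Y ++ [z])).getLast? = some z := by
  rw [show f :: (Y ++ [z]) = (f :: Y) ++ [z] by simp, List.getLast?_concat]

/-- Master lemma: `flipT` preserves goodness and length, is involutive,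
and flips the sign of the loop weight. -/
lemma flip_good {e : G.DEdge} {l : List G.DEdge} (x : Sym2 G.V → ℝ)
    (hg : G.IsLoop l ∧ 1 ≤ G.visits l e ∧ 1 ≤ G.visits l (G.rev e)) :
    (G.IsLoop (flipT e l) ∧ 1 ≤ G.visits (flipT e l) e ∧
      1 ≤ G.visits (flipT e l) (G.rev e))
    ∧ flipT e (flipT e l) = l
    ∧ (flipT e l).length = l.length
    ∧ G.wlam x (flipT e l) = - G.wlam x l := by
  obtain ⟨⟨A, f, M, B, hf, hA, hB, hl⟩⟩ := good_decomp hg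
  set M' : List G.DEdge := (M.map G.rev).reverse with hM'
  obtain ⟨h0, h0eq, h0head⟩ := head?_take1 A f (M ++ G.rev f :: B)
  obtain ⟨h0', h0eq', h0head'⟩ := head?_take1 A f (M' ++ G.rev f :: B)
  have hh00 : h0' = h0 := by
    have := h0eq.symm.trans h0eq'
    exact (List.cons.injEq _ _ _ _ ▸ this).1.symm
  rw [hh00] at h0eq' h0head'
  have hl' : flipT e l = (A ++ f :: (M' ++ G.rev f :: B)) ++ (A ++ [f]).take 1 :=
    flipT_eq' A f M B hf hA hB hl
  have hlen : (flipT e l).length = l.length := by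
    rw [hl', hl]
    simp [hM']
  set T1 : List G.DEdge := (A ++ [f]).take 1 with hT1
  have hshape : l = A ++ ((f :: (M ++ [G.rev f])) ++ (B ++ T1)) := by
    rw [hl]; simp
  have hshape' : flipT e l = A ++ ((f :: (M' ++ [G.rev f])) ++ (B ++ T1)) := by
    rw [hl']; simp
  obtain ⟨⟨hw2, hchain⟩, hlen3, hheads⟩ := hg.1
  have hch : List.Chain' (Rel G) l := hchain
  have hblock : List.Chain' (Rel G) (f :: (M ++ [G.rev f])) := by
    apply hch.infix
    exact ⟨A, B ++ T1, by rw [hshape, List.append_assoc]⟩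
  have hblockchain : List.Chain (Rel G) f (M ++ [G.rev f]) := hblock
  have hblock' : List.Chain' (Rel G) (f :: (M' ++ [G.rev f])) := by
    have h2 := chain'_wrev hblock
    rw [block'_eq, ← hM'] at h2
    exact h2
  have hch0 : List.Chain' (Rel G) (A ++ ((f :: (M ++ [G.rev f])) ++ (B ++ T1))) := by
    rw [← hshape]
    exact hch
  have hch' : List.Chain' (Rel G) (flipT e l) := by
    rw [hshape']
    exact chain'_mid (b1 := f :: (M ++ [G.rev f])) (b2 := f :: (M' ++ [G.rev f])) rfl
      (by simp only [cons_block_getLast]) hblock' hch0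
  have hloop' : G.IsLoop (flipT e l) := by
    refine ⟨⟨?_, hch'⟩, ?_, ?_⟩
    · rw [hlen]; exact hw2
    · rw [hlen]; exact hlen3
    · rw [hl', h0eq, List.getLast?_concat, List.head?_append, h0head']
      rfl
  have hdrop' : (flipT e l).dropLast = A ++ f :: (M' ++ G.rev f :: B) := by
    rw [hl', h0eq, List.dropLast_concat]
  have hvis : 1 ≤ G.visits (flipT e l) e ∧ 1 ≤ G.visits (flipT e l) (G.rev e) := by
    constructor
    · rw [visits, hdrop']
      apply List.count_pos_iff.mpr
      rcases hf with h' | h'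
      · rw [← h']
        exact List.mem_append_right _ List.mem_cons_self
      · rw [show e = G.rev f by rw [h', rev_rev]]
        refine List.mem_append_right _ (List.mem_cons_of_mem _ ?_)
        exact List.mem_append_right _ List.mem_cons_self
    · rw [visits, hdrop']
      apply List.count_pos_iff.mpr
      rcases hf with h' | h'
      · rw [← h']
        refine List.mem_append_right _ (List.mem_cons_of_mem _ ?_)
        exact List.mem_append_right _ List.mem_cons_self
      · rw [← h']
        exact List.mem_append_right _ List.mem_cons_self
  have hinvol : flipT e (flipT e l) = l := by
    rw [flipT_eq' A f M' B hf hA hB hl']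
    have hMM : ((M'.map G.rev).reverse) = M := by
      simp [hM', Function.comp_def]
    rw [hMM, ← hl]
  have hshape2 : l = A ++ f :: (M ++ G.rev f :: (B ++ T1)) := by
    rw [hl]; simp
  have hshape2' : flipT e l = A ++ f :: (M' ++ G.rev f :: (B ++ T1)) := by
    rw [hl']; simp
  have hwlam : G.wlam x (flipT e l) = - G.wlam x l := by
    have ha1 : f :: (M ++ G.rev f :: (B ++ T1)) = (f :: M) ++ G.rev f :: (B ++ T1) := by simp
    have hb1 : f :: (M ++ [G.rev f]) = (f :: M) ++ [G.rev f] := by simp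
    have ha2 : f :: (M' ++ G.rev f :: (B ++ T1)) = (f :: M') ++ G.rev f :: (B ++ T1) := by simp
    have hb2 : f :: (M' ++ [G.rev f]) = (f :: M') ++ [G.rev f] := by simp
    have e1 : G.wlam x l = G.wlam x (A ++ [f]) *
        (G.wlam x (f :: (M ++ [G.rev f])) * G.wlam x (G.rev f :: (B ++ T1))) := by
      rw [hshape2, wlam_split x f A (M ++ G.rev f :: (B ++ T1)), ha1,
        wlam_split x (G.rev f) (f :: M) (B ++ T1), hb1]
    have e2 : G.wlam x (flipT e l) = G.wlam x (A ++ [f]) *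
        (G.wlam x (f :: (M' ++ [G.rev f])) * G.wlam x (G.rev f :: (B ++ T1))) := by
      rw [hshape2', wlam_split x f A (M' ++ G.rev f :: (B ++ T1)), ha2,
        wlam_split x (G.rev f) (f :: M') (B ++ T1), hb2]
    rw [e1, e2, hM', wlam_block_flip x hblockchain]
    ring
  exact ⟨⟨hloop', hvis⟩, hinvol, hlen, hwlam⟩

end PlaneGraph
/-- **Specific cancellations.** For any directed edge `e` and small weights,
the signed measure of the set of loops which visit both `e` and `-e`
vanishes: `Σ_ℓ λ(ℓ)/|ℓ| = 0`. -/
theorem loop_sum_visits_both_eq_zero (G : PlaneGraph) (x : Sym2 G.V → ℝ)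
    (Δ : ℕ) (hΔ : 2 ≤ Δ) (hdeg : ∀ v : G.V, G.degV v ≤ Δ)
    (hx : ∀ e ∈ G.E, |x e| < 1 / ((Δ : ℝ) - 1)) (e : G.DEdge) :
    ∑' ℓ : {l : List G.DEdge //
        G.IsLoop l ∧ 1 ≤ G.visits l e ∧ 1 ≤ G.visits l (G.rev e)},
      G.wlam x ℓ.val / (G.len ℓ.val : ℂ) = 0 := by
  classical
  set S := {l : List G.DEdge //
      G.IsLoop l ∧ 1 ≤ G.visits l e ∧ 1 ≤ G.visits l (G.rev e)} with hS
  set F : S → ℂ := fun ℓ => G.wlam x ℓ.val / (G.len ℓ.val : ℂ) with hF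
  let T : S → S := fun ℓ => ⟨PlaneGraph.flipT e ℓ.val, (PlaneGraph.flip_good x ℓ.prop).1⟩
  have hT : Function.Involutive T := by
    intro ℓ
    exact Subtype.ext (PlaneGraph.flip_good x ℓ.prop).2.1
  have hFT : ∀ ℓ : S, F (T ℓ) = - F ℓ := by
    intro ℓ
    have h := PlaneGraph.flip_good x ℓ.prop
    show G.wlam x (PlaneGraph.flipT e ℓ.val) / (G.len (PlaneGraph.flipT e ℓ.val) : ℂ)
      = -(G.wlam x ℓ.val / (G.len ℓ.val : ℂ))
    rw [h.2.2.2, PlaneGraph.len, PlaneGraph.len, h.2.2.1, neg_div]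
  have h1 : ∑' ℓ : S, F ℓ = ∑' ℓ : S, F (T ℓ) :=
    (Equiv.tsum_eq (Function.Involutive.toPerm T hT) F).symm
  have h2 : ∑' ℓ : S, F (T ℓ) = - ∑' ℓ : S, F ℓ := by
    calc ∑' ℓ : S, F (T ℓ) = ∑' ℓ : S, -F ℓ := by
          exact tsum_congr hFT
      _ = - ∑' ℓ : S, F ℓ := tsum_neg
  have h3 : ∑' ℓ : S, F ℓ = - ∑' ℓ : S, F ℓ := h1.trans h2
  have : ∑' ℓ : S, F ℓ = 0 := by linear_combination (1/2 : ℂ) * h3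
  exact this
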